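/- Let X_1,...,X_n be independent nonnegative logconcave random variables each with mean μ. Then for ε ∈ [0,1], Pr[∑ X_i ≤ (1−ε)μn] ≤ exp(−n(−ln(1−ε) − ε)). -/

import Mathlib

open MeasureTheory ProbabilityTheory

/-- A function `f : ℝ → ℝ` (a density) is logconcave. -/
def LogConcaveFn (f : ℝ → ℝ) : Prop :=
  ∀ x y t : ℝ, 0 ≤ t → t ≤ 1 → (f x) ^ t * (f y) ^ (1 - t) ≤ f (t * x + (1 - t) * y)

open scoped ENNReal NNReal
open Real Set

lemma logconcave_superlevel {f : ℝ → ℝ} (hf0 : ∀ x, 0 ≤ f x) (hlc : LogConcaveFn f)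
    (k c : ℝ) (hc : 0 ≤ c) {p q z : ℝ}
    (hp : c < f p * Real.exp (k * p)) (hq : c < f q * Real.exp (k * q))
    (h1 : p ≤ z) (h2 : z ≤ q) : c < f z * Real.exp (k * z) := by
  rcases eq_or_lt_of_le (h1.trans h2) with hpq | hpq
  · have hz : z = p := le_antisymm (hpq ▸ h2) h1
    rwa [hz]
  set t := (q - z) / (q - p) with ht_def
  have hqp : 0 < q - p := by linarith
  have ht0 : 0 ≤ t := div_nonneg (by linarith) hqp.le
  have ht1 : t ≤ 1 := by rw [div_le_one hqp]; linarith
  have hz : z = t * p + (1 - t) * q := by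
    have h := div_mul_cancel₀ (q - z) hqp.ne'
    rw [← ht_def] at h
    linear_combination h
  rcases eq_or_lt_of_le ht0 with h | htpos
  · have : q - z = 0 := by
      rcases div_eq_zero_iff.1 h.symm with h' | h'
      · exact h'
      · exact absurd h' hqp.ne'
    have : z = q := by linarith
    rwa [this]
  rcases eq_or_lt_of_le ht1 with h | ht1pos
  · have : q - z = q - p := by
      have := (div_eq_one_iff_eq hqp.ne').1 h
      linarith
    have : z = p := by linarith
    rwa [this]
  have key := hlc p q t ht0 ht1
  rw [← hz] at key
  have e1 : Real.exp (k * z) = Real.exp (k * p) ^ t * Real.exp (k * q) ^ (1 - t) := by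
    rw [← Real.exp_mul, ← Real.exp_mul, ← Real.exp_add]
    congr 1
    rw [hz]; ring
  have e2 : (f p * Real.exp (k * p)) ^ t * (f q * Real.exp (k * q)) ^ (1 - t)
      = (f p ^ t * f q ^ (1 - t)) * Real.exp (k * z) := by
    rw [Real.mul_rpow (hf0 p) (Real.exp_pos _).le, Real.mul_rpow (hf0 q) (Real.exp_pos _).le, e1]
    ring
  have hstep : c < (f p * Real.exp (k * p)) ^ t * (f q * Real.exp (k * q)) ^ (1 - t) := by
    rcases eq_or_lt_of_le hc with hc0 | hc0
    · rw [← hc0]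
      have h1' : (0:ℝ) < f p * Real.exp (k * p) := by rw [hc0]; exact hp
      have h2' : (0:ℝ) < f q * Real.exp (k * q) := by rw [hc0]; exact hq
      exact mul_pos (Real.rpow_pos_of_pos h1' _) (Real.rpow_pos_of_pos h2' _)
    · have hct : c ^ t * c ^ (1 - t) = c := by
        rw [← Real.rpow_add hc0]; norm_num
      calc c = c ^ t * c ^ (1 - t) := hct.symm
        _ < (f p * Real.exp (k * p)) ^ t * (f q * Real.exp (k * q)) ^ (1 - t) := by
            apply mul_lt_mul'' (Real.rpow_lt_rpow hc0.le hp htpos)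
              (Real.rpow_lt_rpow hc0.le hq (by linarith)) <;> positivity
  calc c < (f p * Real.exp (k * p)) ^ t * (f q * Real.exp (k * q)) ^ (1 - t) := hstep
    _ = (f p ^ t * f q ^ (1 - t)) * Real.exp (k * z) := e2
    _ ≤ f z * Real.exp (k * z) := mul_le_mul_of_nonneg_right key (Real.exp_pos _).le

lemma logconcave_measurable {f : ℝ → ℝ} (hf0 : ∀ x, 0 ≤ f x) (hlc : LogConcaveFn f) :
    Measurable f := by
  apply measurable_of_Ioi
  intro c
  rcases lt_or_ge c 0 with hc | hc
  · have : f ⁻¹' Ioi c = univ := eq_univ_of_forall fun x => lt_of_lt_of_le hc (hf0 x)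
    rw [this]; exact MeasurableSet.univ
  · have : OrdConnected (f ⁻¹' Ioi c) := by
      constructor
      intro p hp q hq z hz
      have hp' : c < f p * Real.exp (0 * p) := by simpa using hp
      have hq' : c < f q * Real.exp (0 * q) := by simpa using hq
      have := logconcave_superlevel hf0 hlc 0 c hc hp' hq' hz.1 hz.2
      simpa using this
    exact this.measurableSet

lemma convexOn_exp_neg_mul (l : ℝ) : ConvexOn ℝ univ fun x : ℝ => Real.exp (-(l * x)) := by
  refine ⟨convex_univ, fun x _ y _ s t hs ht hst => ?_⟩
  have h := convexOn_exp.2 (mem_univ (-(l * x))) (mem_univ (-(l * y))) hs ht hst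
  simp only [smul_eq_mul] at h ⊢
  convert h using 2
  ring

lemma convex_secant_inside {φ : ℝ → ℝ} (hφ : ConvexOn ℝ univ φ) {a b x : ℝ}
    (hab : a < b) (h1 : a ≤ x) (h2 : x ≤ b) :
    φ x ≤ φ a + (φ b - φ a) / (b - a) * (x - a) := by
  have hba : 0 < b - a := by linarith
  have key : (φ x - φ a) * (b - a) ≤ (φ b - φ a) * (x - a) := by
    rcases eq_or_lt_of_le h1 with h | h
    · rw [← h]; simp
    · rcases eq_or_lt_of_le h2 with h' | h'
      · rw [h']
      · have aux := hφ.secant_mono_aux1 (mem_univ a) (mem_univ b) h h'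
        nlinarith [aux]
  have h2' : (φ b - φ a) / (b - a) * (x - a) ≥ φ x - φ a := by
    rw [div_mul_eq_mul_div, ge_iff_le, le_div_iff₀ hba]
    exact key
  linarith

lemma convex_secant_outside {φ : ℝ → ℝ} (hφ : ConvexOn ℝ univ φ) {a b x : ℝ}
    (hab : a < b) (hx : x ≤ a ∨ b ≤ x) :
    φ a + (φ b - φ a) / (b - a) * (x - a) ≤ φ x := by
  have hba : 0 < b - a := by linarith
  have key : (φ b - φ a) * (x - a) ≤ (φ x - φ a) * (b - a) := by
    rcases hx with hx | hx
    · rcases eq_or_lt_of_le hx with h | h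
      · rw [h]; simp
      · have aux := hφ.secant_mono_aux1 (mem_univ x) (mem_univ b) h hab
        nlinarith [aux]
    · rcases eq_or_lt_of_le hx with h | h
      · rw [← h]
      · have aux := hφ.secant_mono_aux1 (mem_univ a) (mem_univ x) hab h
        nlinarith [aux]
  have h2' : (φ b - φ a) / (b - a) * (x - a) ≤ φ x - φ a := by
    rw [div_mul_eq_mul_div, div_le_iff₀ hba]
    exact key
  linarith

lemma integral_exp_neg_mul {c : ℝ} (hc : 0 < c) :
    ∫ x in Ioi (0:ℝ), Real.exp (-(c * x)) = 1 / c := by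
  have h := integral_rpow_mul_exp_neg_mul_Ioi (by norm_num : (0:ℝ) < 1) hc
  simp only [sub_self, Real.rpow_zero, one_mul, Real.rpow_one, Real.Gamma_one, mul_one] at h
  exact h

lemma integral_id_mul_exp_neg_mul {c : ℝ} (hc : 0 < c) :
    ∫ x in Ioi (0:ℝ), x * Real.exp (-(c * x)) = 1 / c ^ 2 := by
  have h := integral_rpow_mul_exp_neg_mul_Ioi (by norm_num : (0:ℝ) < 2) hc
  have e : ((1:ℝ) / c) ^ (2:ℝ) = 1 / c ^ 2 := by
    rw [show (2:ℝ) = ((2:ℕ):ℝ) by norm_num, Real.rpow_natCast, div_pow, one_pow]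
  rw [e, Real.Gamma_two, mul_one] at h
  have e2 : ∀ t : ℝ, t ^ ((2:ℝ) - 1) = t ^ (1:ℝ) := fun t => by norm_num
  simp only [e2, Real.rpow_one] at h
  exact h

lemma integrableOn_exp_neg_mul {c : ℝ} (hc : 0 < c) :
    IntegrableOn (fun x => Real.exp (-(c * x))) (Ioi (0:ℝ)) := by
  simpa [neg_mul] using exp_neg_integrableOn_Ioi 0 hc

lemma integrableOn_id_mul_exp_neg_mul {c : ℝ} (hc : 0 < c) :
    IntegrableOn (fun x => x * Real.exp (-(c * x))) (Ioi (0:ℝ)) := by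
  have hdom : IntegrableOn (fun x => (2 / c) * Real.exp (-(c / 2 * x))) (Ioi (0:ℝ)) :=
    (integrableOn_exp_neg_mul (half_pos hc)).const_mul _
  refine Integrable.mono hdom
    ((measurable_id.mul ((measurable_id.const_mul c).neg.exp)).aestronglyMeasurable) ?_
  refine (ae_restrict_iff' measurableSet_Ioi).2 (Filter.Eventually.of_forall fun x hx => ?_)
  have hx0 : (0:ℝ) < x := hx
  rw [Real.norm_eq_abs, Real.norm_eq_abs, abs_of_nonneg (by positivity),
    abs_of_nonneg (by positivity)]
  have h1 : c / 2 * x ≤ Real.exp (c / 2 * x) := by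
    have := Real.add_one_le_exp (c / 2 * x)
    linarith
  have h2 : x ≤ 2 / c * Real.exp (c / 2 * x) := by
    have h3 : (2 / c) * (c / 2 * x) ≤ (2 / c) * Real.exp (c / 2 * x) :=
      mul_le_mul_of_nonneg_left h1 (by positivity)
    have h4 : (2 / c) * (c / 2 * x) = x := by field_simp
    linarith
  have e : Real.exp (c / 2 * x) * Real.exp (-(c * x)) = Real.exp (-(c / 2 * x)) := by
    rw [← Real.exp_add]; congr 1; ring
  calc x * Real.exp (-(c * x)) ≤ (2 / c * Real.exp (c / 2 * x)) * Real.exp (-(c * x)) :=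
        mul_le_mul_of_nonneg_right h2 (Real.exp_pos _).le
    _ = 2 / c * Real.exp (-(c / 2 * x)) := by rw [mul_assoc, e]

lemma integral_ite_Ici (w : ℝ → ℝ) :
    ∫ x, (if 0 ≤ x then w x else 0) = ∫ x in Ioi (0:ℝ), w x := by
  rw [show (fun x => if 0 ≤ x then w x else 0) = Set.indicator (Ici (0:ℝ)) w from
      funext fun x => by simp [Set.indicator_apply, mem_Ici],
    integral_indicator measurableSet_Ici, integral_Ici_eq_integral_Ioi]

lemma integrable_ite_Ici (w : ℝ → ℝ) (hw : IntegrableOn w (Ioi (0:ℝ))) :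
    Integrable (fun x => if 0 ≤ x then w x else 0) := by
  rw [show (fun x => if 0 ≤ x then w x else 0) = Set.indicator (Ici (0:ℝ)) w from
      funext fun x => by simp [Set.indicator_apply, mem_Ici],
    integrable_indicator_iff measurableSet_Ici]
  exact Iff.mpr integrableOn_Ici_iff_integrableOn_Ioi hw
lemma key_mgf_bound {f : ℝ → ℝ} (hf0 : ∀ x, 0 ≤ f x) (hlc : LogConcaveFn f)
    (hneg : ∀ᵐ x : ℝ, x < 0 → f x = 0)
    (hif : Integrable f) (hf1 : (∫ x, f x) = 1)
    (hixf : Integrable fun x => x * f x) {μ : ℝ} (hμ : 0 < μ)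
    (hmean : (∫ x, x * f x) = μ) {l : ℝ} (hl : 0 ≤ l) :
    ∫ x, Real.exp (-(l * x)) * f x ≤ 1 / (1 + l * μ) := by
  set c : ℝ := μ⁻¹ with hc_def
  have hc : 0 < c := inv_pos.2 hμ
  set g : ℝ → ℝ := fun x => if 0 ≤ x then c * Real.exp (-(c * x)) else 0 with hg_def
  set φ : ℝ → ℝ := fun x => Real.exp (-(l * x)) with hφ_def
  have hφpos : ∀ x, 0 < φ x := fun x => Real.exp_pos _
  -- g facts
  have hg_int : Integrable g :=
    integrable_ite_Ici _ ((integrableOn_exp_neg_mul hc).const_mul c)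
  have hg1 : (∫ x, g x) = 1 := by
    rw [hg_def, integral_ite_Ici, integral_const_mul, integral_exp_neg_mul hc]
    field_simp
  have hgx_fun : (fun x => x * g x) = fun x => if 0 ≤ x then c * (x * Real.exp (-(c * x))) else 0 := by
    funext x
    by_cases h : 0 ≤ x <;> simp [hg_def, h] <;> ring
  have hgx_int : Integrable (fun x => x * g x) := by
    rw [hgx_fun]
    exact integrable_ite_Ici _ ((integrableOn_id_mul_exp_neg_mul hc).const_mul c)
  have hgx : (∫ x, x * g x) = μ := by
    rw [hgx_fun, integral_ite_Ici, integral_const_mul, integral_id_mul_exp_neg_mul hc, hc_def]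
    field_simp
  have hlc' : 0 < l + c := by linarith
  have hφg_fun : (fun x => φ x * g x)
      = fun x => if 0 ≤ x then c * Real.exp (-((l + c) * x)) else 0 := by
    funext x
    by_cases h : 0 ≤ x
    · simp only [hφ_def, hg_def, if_pos h]
      rw [show Real.exp (-(l * x)) * (c * Real.exp (-(c * x)))
          = c * (Real.exp (-(l * x)) * Real.exp (-(c * x))) from by ring, ← Real.exp_add]
      congr 2
      ring
    · simp [hφ_def, hg_def, if_neg h]
  have hφg_int : Integrable (fun x => φ x * g x) := by
    rw [hφg_fun]
    exact integrable_ite_Ici _ ((integrableOn_exp_neg_mul hlc').const_mul c)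
  have hφg : (∫ x, φ x * g x) = 1 / (1 + l * μ) := by
    have h1 : l + μ⁻¹ ≠ 0 := by rw [← hc_def]; exact hlc'.ne'
    have h2 : (1 : ℝ) + l * μ ≠ 0 := by nlinarith [mul_nonneg hl hμ.le]
    rw [hφg_fun, integral_ite_Ici, integral_const_mul, integral_exp_neg_mul hlc', hc_def]
    field_simp
    ring
  -- f facts
  have hφf_int : Integrable (fun x => φ x * f x) := by
    refine hif.mono (((Real.continuous_exp.comp
      ((continuous_const.mul continuous_id).neg)).aestronglyMeasurable).mul hif.1) ?_
    filter_upwards [hneg] with x hx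
    by_cases hx0 : 0 ≤ x
    · have hφ1 : φ x ≤ 1 := Real.exp_le_one_iff.2 (by nlinarith)
      calc ‖φ x * f x‖ = φ x * f x := abs_of_nonneg (mul_nonneg (hφpos x).le (hf0 x))
        _ ≤ f x := by nlinarith [hf0 x]
        _ ≤ ‖f x‖ := le_abs_self _
    · rw [hx (lt_of_not_ge hx0)]
      simp
  -- the crossing set
  set I : Set ℝ := {x | c < f x * Real.exp (c * x)} with hI_def
  have hIint : ∀ {p q z : ℝ}, p ∈ I → q ∈ I → p ≤ z → z ≤ q → z ∈ I :=
    fun hp hq h1 h2 => logconcave_superlevel hf0 hlc c c hc.le hp hq h1 h2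
  have hgle : ∀ x, 0 ≤ x → x ∉ I → f x ≤ g x := by
    intro x hx hxI
    simp only [hI_def, mem_setOf_eq, not_lt] at hxI
    rw [hg_def]
    simp only [if_pos hx]
    have h := mul_le_mul_of_nonneg_right hxI (Real.exp_pos (-(c * x))).le
    rwa [mul_assoc, ← Real.exp_add, add_neg_cancel, Real.exp_zero, mul_one] at h
  have hgge : ∀ x, 0 ≤ x → x ∈ I → g x ≤ f x := by
    intro x hx hxI
    simp only [hI_def, mem_setOf_eq] at hxI
    rw [hg_def]
    simp only [if_pos hx]
    have h := mul_le_mul_of_nonneg_right hxI.le (Real.exp_pos (-(c * x))).le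
    rwa [mul_assoc, ← Real.exp_add, add_neg_cancel, Real.exp_zero, mul_one] at h
  have hIpos : ∀ x, x ∈ I → 0 < f x := by
    intro x hx
    simp only [hI_def, mem_setOf_eq] at hx
    nlinarith [Real.exp_pos (c * x), hf0 x]
  have hNnull : volume {x : ℝ | x < 0 ∧ f x ≠ 0} = 0 := by
    have h := hneg
    rw [ae_iff] at h
    convert h using 2
    ext x
    simp [_root_.not_imp]
  -- obtain the affine minorant/majorant
  obtain ⟨α, β, hαβ⟩ : ∃ α β : ℝ, ∀ᵐ x : ℝ, (φ x - (α + β * x)) * (f x - g x) ≤ 0 := by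
    by_cases hI2 : ∃ p ∈ I, ∃ q ∈ I, p < q
    · obtain ⟨p, hp, q, hq, hpq⟩ := hI2
      have hI0 : ∀ r ∈ I, (0:ℝ) ≤ r := by
        intro r hr
        by_contra hneg'
        push_neg at hneg'
        have hlo : min r p ∈ I := by
          rcases min_choice r p with h | h <;> rw [h]
          exacts [hr, hp]
        have hhi : max r q ∈ I := by
          rcases max_choice r q with h | h <;> rw [h]
          exacts [hr, hq]
        have hlohi : min r p < max r q :=
          lt_of_le_of_lt (min_le_right _ _) (lt_of_lt_of_le hpq (le_max_right _ _))
        have hlo0 : min r p < 0 := lt_of_le_of_lt (min_le_left _ _) hneg'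
        have hlom : min r p < min (max r q) 0 := lt_min hlohi hlo0
        have hsubN : Ico (min r p) (min (max r q) 0) ⊆ {x : ℝ | x < 0 ∧ f x ≠ 0} := by
          intro x hx
          refine ⟨lt_of_lt_of_le hx.2 (min_le_right _ _), ?_⟩
          have hxI : x ∈ I := hIint hlo hhi hx.1 (le_trans hx.2.le (min_le_left _ _))
          exact ne_of_gt (hIpos x hxI)
        have hcontra := measure_mono_null hsubN hNnull
        rw [Real.volume_Ico] at hcontra
        rw [ENNReal.ofReal_eq_zero] at hcontra
        linarith
      have hne : I.Nonempty := ⟨p, hp⟩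
      have hbdd : BddBelow I := ⟨0, hI0⟩
      set a := sInf I with ha_def
      have ha0 : 0 ≤ a := le_csInf hne hI0
      have hnotmem_lt : ∀ x, x < a → x ∉ I :=
        fun x hx hxI => absurd (csInf_le hbdd hxI) (not_le.2 hx)
      have hmem_between : ∀ x, a < x → (∃ v ∈ I, x ≤ v) → x ∈ I := by
        rintro x hx ⟨v, hv, hxv⟩
        obtain ⟨u, hu, hux⟩ := exists_lt_of_csInf_lt hne hx
        exact hIint hu hv hux.le hxv
      by_cases hbA : BddAbove I
      · set b := sSup I with hb_def
        have hab : a < b :=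
          lt_of_le_of_lt (csInf_le hbdd hp) (lt_of_lt_of_le hpq (le_csSup hbA hq))
        refine ⟨φ a - (φ b - φ a) / (b - a) * a, (φ b - φ a) / (b - a), ?_⟩
        filter_upwards [hneg] with x hxneg
        rw [show φ a - (φ b - φ a) / (b - a) * a + (φ b - φ a) / (b - a) * x
            = φ a + (φ b - φ a) / (b - a) * (x - a) from by ring]
        rcases lt_or_ge x 0 with hx0 | hx0
        · rw [hxneg hx0, hg_def]
          simp [if_neg (not_le.2 hx0)]
        · rcases lt_trichotomy x a with hxa | hxa | hxa
          · have hfg : f x - g x ≤ 0 := sub_nonpos.2 (hgle x hx0 (hnotmem_lt x hxa))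
            have hφx : 0 ≤ φ x - (φ a + (φ b - φ a) / (b - a) * (x - a)) :=
              sub_nonneg.2 (convex_secant_outside (convexOn_exp_neg_mul l) hab (Or.inl hxa.le))
            exact mul_nonpos_iff.2 (Or.inl ⟨hφx, hfg⟩)
          · rw [hxa, show φ a + (φ b - φ a) / (b - a) * (a - a) = φ a from by ring,
              sub_self, zero_mul]
          · rcases lt_trichotomy x b with hxb | hxb | hxb
            · obtain ⟨v, hv, hv2⟩ := exists_lt_of_lt_csSup hne hxb
              have hxI : x ∈ I := hmem_between x hxa ⟨v, hv, hv2.le⟩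
              have hfg : 0 ≤ f x - g x := sub_nonneg.2 (hgge x hx0 hxI)
              have hφx : φ x - (φ a + (φ b - φ a) / (b - a) * (x - a)) ≤ 0 :=
                sub_nonpos.2 (convex_secant_inside (convexOn_exp_neg_mul l) hab hxa.le hxb.le)
              exact mul_nonpos_iff.2 (Or.inr ⟨hφx, hfg⟩)
            · rw [hxb, show (φ b - φ a) / (b - a) * (b - a) = φ b - φ a from
                  div_mul_cancel₀ _ (sub_pos.2 hab).ne',
                show φ a + (φ b - φ a) = φ b from by ring, sub_self, zero_mul]
            · have hxnI : x ∉ I := fun hxI => absurd (le_csSup hbA hxI) (not_le.2 hxb)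
              have hfg : f x - g x ≤ 0 := sub_nonpos.2 (hgle x hx0 hxnI)
              have hφx : 0 ≤ φ x - (φ a + (φ b - φ a) / (b - a) * (x - a)) :=
                sub_nonneg.2 (convex_secant_outside (convexOn_exp_neg_mul l) hab (Or.inr hxb.le))
              exact mul_nonpos_iff.2 (Or.inl ⟨hφx, hfg⟩)
      · refine ⟨φ a, 0, ?_⟩
        filter_upwards [hneg] with x hxneg
        simp only [zero_mul, add_zero]
        rcases lt_or_ge x 0 with hx0 | hx0
        · rw [hxneg hx0, hg_def]
          simp [if_neg (not_le.2 hx0)]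
        · rcases lt_trichotomy x a with hxa | hxa | hxa
          · have hfg : f x - g x ≤ 0 := sub_nonpos.2 (hgle x hx0 (hnotmem_lt x hxa))
            have hφx : 0 ≤ φ x - φ a := by
              rw [hφ_def]
              simp only
              rw [sub_nonneg, Real.exp_le_exp]
              nlinarith
            exact mul_nonpos_iff.2 (Or.inl ⟨hφx, hfg⟩)
          · rw [hxa, sub_self, zero_mul]
          · obtain ⟨v, hv⟩ := not_bddAbove_iff.1 hbA x
            have hxI : x ∈ I := hmem_between x hxa ⟨v, hv.1, hv.2.le⟩
            have hfg : 0 ≤ f x - g x := sub_nonneg.2 (hgge x hx0 hxI)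
            have hφx : φ x - φ a ≤ 0 := by
              rw [hφ_def]
              simp only
              rw [sub_nonpos, Real.exp_le_exp]
              nlinarith
            exact mul_nonpos_iff.2 (Or.inr ⟨hφx, hfg⟩)
    · refine ⟨0, 0, ?_⟩
      have hsub : Set.Subsingleton I := by
        intro u hu v hv
        by_contra hne
        rcases lt_or_gt_of_ne hne with h | h
        · exact hI2 ⟨u, hu, v, hv, h⟩
        · exact hI2 ⟨v, hv, u, hu, h⟩
      have hInull : volume I = 0 := hsub.measure_zero _
      have hAE : ∀ᵐ x : ℝ, f x - g x ≤ 0 := by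
        rw [ae_iff]
        refine measure_mono_null ?_ (measure_union_null hInull hNnull)
        intro x hx
        simp only [mem_setOf_eq, not_le] at hx
        by_cases hx0 : 0 ≤ x
        · left
          by_contra hxI
          have := hgle x hx0 hxI
          linarith
        · right
          have hgx0 : g x = 0 := by rw [hg_def]; simp [if_neg hx0]
          refine ⟨lt_of_not_ge hx0, ?_⟩
          rw [hgx0] at hx
          exact ne_of_gt (by linarith)
      filter_upwards [hAE] with x hx
      have h0 : (0:ℝ) ≤ φ x := (hφpos x).le
      simp only [zero_mul, add_zero, sub_zero]
      exact mul_nonpos_iff.2 (Or.inl ⟨h0, hx⟩)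
  -- conclude by integration
  have hℓf_fun : (fun x => (α + β * x) * f x) = fun x => α * f x + β * (x * f x) :=
    funext fun x => by ring
  have hℓg_fun : (fun x => (α + β * x) * g x) = fun x => α * g x + β * (x * g x) :=
    funext fun x => by ring
  have hiℓf : Integrable (fun x => (α + β * x) * f x) := by
    rw [hℓf_fun]; exact (hif.const_mul α).add (hixf.const_mul β)
  have hiℓg : Integrable (fun x => (α + β * x) * g x) := by
    rw [hℓg_fun]; exact (hg_int.const_mul α).add (hgx_int.const_mul β)
  have hℓf : (∫ x, (α + β * x) * f x) = α + β * μ := by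
    rw [hℓf_fun, integral_add (hif.const_mul α) (hixf.const_mul β),
      integral_const_mul, integral_const_mul, hf1, hmean]
    ring
  have hℓg : (∫ x, (α + β * x) * g x) = α + β * μ := by
    rw [hℓg_fun, integral_add (hg_int.const_mul α) (hgx_int.const_mul β),
      integral_const_mul, integral_const_mul, hg1, hgx]
    ring
  have hsplit : (∫ x, (φ x - (α + β * x)) * (f x - g x))
      = ((∫ x, φ x * f x) - (∫ x, φ x * g x))
        - ((∫ x, (α + β * x) * f x) - ∫ x, (α + β * x) * g x) := by
    rw [show (fun x => (φ x - (α + β * x)) * (f x - g x))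
        = fun x => (φ x * f x - φ x * g x) - ((α + β * x) * f x - (α + β * x) * g x) from
        funext fun x => by ring]
    have i1 : Integrable (fun x => φ x * f x - φ x * g x) := hφf_int.sub hφg_int
    have i2 : Integrable (fun x => (α + β * x) * f x - (α + β * x) * g x) := hiℓf.sub hiℓg
    rw [integral_sub i1 i2, integral_sub hφf_int hφg_int, integral_sub hiℓf hiℓg]
  have hnonpos := integral_nonpos_of_ae hαβ
  rw [hsplit, hℓf, hℓg, hφg] at hnonpos
  linarith
lemma withDensity_integral_eq {f : ℝ → ℝ} (hf0 : ∀ x, 0 ≤ f x) (hfm : Measurable f)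
    (g : ℝ → ℝ) :
    ∫ x, g x ∂(volume.withDensity fun t => ENNReal.ofReal (f t)) = ∫ x, g x * f x := by
  have e : (fun t => ENNReal.ofReal (f t)) = fun t => ((f t).toNNReal : ℝ≥0∞) := rfl
  rw [e, integral_withDensity_eq_integral_smul (f := fun t => (f t).toNNReal)
    (measurable_real_toNNReal.comp hfm) g]
  congr 1
  funext x
  rw [NNReal.smul_def, smul_eq_mul, Real.coe_toNNReal _ (hf0 x), mul_comm]

lemma withDensity_integrable_iff {f : ℝ → ℝ} (hf0 : ∀ x, 0 ≤ f x) (hfm : Measurable f)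
    (g : ℝ → ℝ) :
    Integrable g (volume.withDensity fun t => ENNReal.ofReal (f t))
      ↔ Integrable (fun x => g x * f x) volume := by
  rw [integrable_withDensity_iff hfm.ennreal_ofReal
    (Filter.Eventually.of_forall fun x => ENNReal.ofReal_lt_top)]
  simp_rw [ENNReal.toReal_ofReal (hf0 _)]

/-- Lower tail bound for a sum of `n` independent nonnegative logconcave random variables
with common mean `μ`: for `ε ∈ [0,1]`, `Pr[∑ Xᵢ ≤ (1−ε) μ n] ≤ exp (−n (−ln (1−ε) − ε))`. -/
theorem sum_nonneg_logconcave_lower_tail {Ω : Type*} [MeasurableSpace Ω] (P : Measure Ω)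
    [IsProbabilityMeasure P] {n : ℕ} (X : Fin n → Ω → ℝ)
    (hX : ∀ i, Measurable (X i))
    (hindep : iIndepFun X P)
    (hpos : ∀ i, ∀ᵐ ω ∂P, 0 ≤ X i ω)
    (f : Fin n → ℝ → ℝ) (hf : ∀ i t, 0 ≤ f i t) (hlc : ∀ i, LogConcaveFn (f i))
    (hdens : ∀ i, P.map (X i) = volume.withDensity (fun t => ENNReal.ofReal (f i t)))
    (μ : ℝ) (hμ : 0 < μ) (hmean : ∀ i, ∫ ω, X i ω ∂P = μ)
    (ε : ℝ) (hε0 : 0 ≤ ε) (hε1 : ε ≤ 1) :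
    P {ω | ∑ i, X i ω ≤ (1 - ε) * μ * n} ≤
      ENNReal.ofReal (Real.exp (-(n * (-Real.log (1 - ε) - ε)))) := by
  rcases eq_or_lt_of_le hε0 with hε0' | hε0'
  · rw [← hε0']
    simp only [sub_zero, Real.log_one, neg_zero, mul_zero, Real.exp_zero, ENNReal.ofReal_one]
    exact prob_le_one
  rcases eq_or_lt_of_le hε1 with hε1' | hε1'
  · rw [hε1']
    simp only [sub_self, Real.log_zero, neg_zero, zero_sub, mul_neg, mul_one, neg_neg]
    refine le_trans prob_le_one ?_
    rw [show (1 : ℝ≥0∞) = ENNReal.ofReal 1 from (ENNReal.ofReal_one).symm]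
    exact ENNReal.ofReal_le_ofReal (Real.one_le_exp (by positivity))
  -- main case : 0 < ε < 1
  have h1ε : 0 < 1 - ε := by linarith
  set l : ℝ := ε / ((1 - ε) * μ) with hl_def
  have hlpos : 0 < l := by positivity
  -- integrability of X i
  have hXint : ∀ i, Integrable (X i) P := by
    intro i
    by_contra h
    have := hmean i
    rw [integral_undef h] at this
    linarith
  have hmf : ∀ i, Measurable (f i) := fun i => logconcave_measurable (hf i) (hlc i)
  have hmap : ∀ i, IsProbabilityMeasure (P.map (X i)) :=
    fun i => Measure.isProbabilityMeasure_map (hX i).aemeasurable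
  -- density integrates to one
  have hA1 : ∀ i, (∫⁻ x, ENNReal.ofReal (f i x)) = 1 := by
    intro i
    have h := (hmap i).measure_univ
    rw [hdens i, withDensity_apply _ MeasurableSet.univ, Measure.restrict_univ] at h
    exact h
  have hA2 : ∀ i, (∫ x, f i x) = 1 := by
    intro i
    rw [integral_eq_lintegral_of_nonneg_ae (Filter.Eventually.of_forall (hf i))
      (hmf i).aestronglyMeasurable, hA1 i]
    simp
  have hA3 : ∀ i, Integrable (f i) := by
    intro i
    refine ⟨(hmf i).aestronglyMeasurable, ?_⟩
    rw [hasFiniteIntegral_iff_ofReal (Filter.Eventually.of_forall (hf i)), hA1 i]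
    exact ENNReal.one_lt_top
  have hA4 : ∀ i, Integrable (fun x : ℝ => x * f i x) := by
    intro i
    have h : Integrable (fun x : ℝ => x) (P.map (X i)) :=
      (integrable_map_measure aestronglyMeasurable_id (hX i).aemeasurable).2 (hXint i)
    rw [hdens i] at h
    exact (withDensity_integrable_iff (hf i) (hmf i) _).1 h
  have hA5 : ∀ i, (∫ x, x * f i x) = μ := by
    intro i
    have h : (∫ x, x ∂(P.map (X i))) = μ := by
      rw [integral_map (f := fun x : ℝ => x) (hX i).aemeasurable
        aestronglyMeasurable_id]
      exact hmean i
    rwa [hdens i, withDensity_integral_eq (hf i) (hmf i)] at h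
  have hA6 : ∀ i, ∀ᵐ x : ℝ, x < 0 → f i x = 0 := by
    intro i
    have hm0 : (P.map (X i)) (Set.Iio 0) = 0 := by
      rw [Measure.map_apply (hX i) measurableSet_Iio]
      have h := hpos i
      rw [ae_iff] at h
      convert h using 2
      ext ω
      simp
    rw [hdens i, withDensity_apply _ measurableSet_Iio] at hm0
    have h := (setLIntegral_eq_zero_iff measurableSet_Iio
      (hmf i).ennreal_ofReal).1 hm0
    filter_upwards [h] with x hx hx0
    have h2 := hx hx0
    simp only [Pi.zero_apply, ENNReal.ofReal_eq_zero] at h2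
    exact le_antisymm h2 (hf i x)
  -- the per-variable mgf bound
  have hkey : ∀ i, mgf (X i) P (-l) ≤ 1 / (1 + l * μ) := by
    intro i
    have hA7 : mgf (X i) P (-l) = ∫ x, Real.exp (-(l * x)) * f i x := by
      rw [mgf]
      have e1 : (∫ ω, Real.exp (-l * X i ω) ∂P)
          = ∫ x, Real.exp (-l * x) ∂(P.map (X i)) := by
        rw [integral_map (f := fun x : ℝ => Real.exp (-l * x)) (hX i).aemeasurable
          ((Real.continuous_exp.comp (continuous_const.mul continuous_id)).aestronglyMeasurable)]
      rw [e1, hdens i, withDensity_integral_eq (hf i) (hmf i)]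
      simp_rw [neg_mul]
    rw [hA7]
    exact key_mgf_bound (hf i) (hlc i) (hA6 i) (hA3 i) (hA2 i) (hA4 i) hμ (hA5 i) hlpos.le
  -- Chernoff
  have hSnn : ∀ᵐ ω ∂P, 0 ≤ ∑ i, X i ω := by
    have h := (MeasureTheory.ae_all_iff).2 hpos
    filter_upwards [h] with ω hω
    exact Finset.sum_nonneg fun i _ => hω i
  have hexpint' : Integrable (fun ω => Real.exp (-l * ∑ i, X i ω)) P := by
    refine Integrable.mono' (integrable_const 1)
      ((((Finset.measurable_sum Finset.univ fun i _ => hX i).const_mul (-l)).exp).aestronglyMeasurable) ?_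
    filter_upwards [hSnn] with ω hω
    rw [Real.norm_eq_abs, abs_of_pos (Real.exp_pos _)]
    refine Real.exp_le_one_iff.2 ?_
    nlinarith
  have hexpint : Integrable (fun ω => Real.exp (-l * (∑ i, X i) ω)) P := by
    have e : (fun ω => Real.exp (-l * (∑ i, X i) ω)) = fun ω => Real.exp (-l * ∑ i, X i ω) := by
      funext ω
      simp [Finset.sum_apply]
    rw [e]
    exact hexpint'
  have hcher := measure_le_le_exp_mul_mgf (μ := P) (X := ∑ i, X i) (t := -l)
    ((1 - ε) * μ * n) (neg_nonpos.2 hlpos.le) hexpint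
  have hmgfS : mgf (∑ i, X i) P (-l) = ∏ i, mgf (X i) P (-l) := hindep.mgf_sum hX Finset.univ
  have hbound1 : (0:ℝ) < 1 + l * μ := by nlinarith
  have hprod : (∏ i, mgf (X i) P (-l)) ≤ (1 / (1 + l * μ)) ^ n := by
    calc (∏ i, mgf (X i) P (-l)) ≤ ∏ _i : Fin n, (1 / (1 + l * μ)) :=
          Finset.prod_le_prod (fun i _ => mgf_nonneg) (fun i _ => hkey i)
      _ = (1 / (1 + l * μ)) ^ n := by
          rw [Finset.prod_const, Finset.card_univ, Fintype.card_fin]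
  have harith : Real.exp (-(-l) * ((1 - ε) * μ * n)) * (1 / (1 + l * μ)) ^ n
      = Real.exp (-(n * (-Real.log (1 - ε) - ε))) := by
    have e1 : (1:ℝ) / (1 + l * μ) = 1 - ε := by
      have h' : (1:ℝ) + l * μ = 1 / (1 - ε) := by
        rw [hl_def]
        field_simp [h1ε.ne', hμ.ne']
        try ring
      rw [h', one_div_one_div]
    have e2 : -(-l) * ((1 - ε) * μ * n) = ε * n := by
      rw [neg_neg, hl_def]
      field_simp
    have e3 : Real.exp (n * Real.log (1 - ε)) = (1 - ε) ^ n := by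
      rw [Real.exp_nat_mul, Real.exp_log h1ε]
    rw [e1, e2, ← e3, ← Real.exp_add]
    congr 1
    ring
  have hfinal : (P {ω | (∑ i, X i) ω ≤ (1 - ε) * μ * n}).toReal
      ≤ Real.exp (-(n * (-Real.log (1 - ε) - ε))) := by
    refine hcher.trans ?_
    rw [hmgfS, ← harith]
    exact mul_le_mul_of_nonneg_left hprod (Real.exp_pos _).le
  have hset : {ω | ∑ i, X i ω ≤ (1 - ε) * μ * n} = {ω | (∑ i, X i) ω ≤ (1 - ε) * μ * n} := by
    ext ω
    simp [Finset.sum_apply]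
  rw [hset]
  exact (ENNReal.le_ofReal_iff_toReal_le (measure_ne_top _ _) (Real.exp_pos _).le).2 hfinal
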